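/- Let y be obtained from a binary string x by deleting two symbols both equal to 1. If N_{0000}(x) ≡ N_{0000}(y) (mod 7), then the string 0000 is preserved from x to y. (In particular, the deletion of a single 1 can create at most 3 new occurrences of 0000 and can destroy none.) -/

import Mathlib

/-- Delete from `x` the symbols at the positions in `S`. -/
def deleteIdxs (x : List Bool) (S : Finset ℕ) : List Bool :=
  ((List.range x.length).filter (fun i => decide (i ∉ S))).map (fun i => x.getD i false)

/-- `w` occurs in `x` at position `i`. -/
def occursAt (w x : List Bool) (i : ℕ) : Prop := w <+: x.drop i

/-- The number of (possibly overlapping) occurrences of `w` in `x`. -/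
def Nw (w x : List Bool) : ℕ :=
  ((Finset.range x.length).filter (fun i => w <+: x.drop i)).card

/-- The position in the shortened string of the junction produced by deleting position `k`. -/
def junction (S : Finset ℕ) (k : ℕ) : ℕ :=
  ((Finset.range k).filter (fun m => m ∉ S)).card

/-- `w` is preserved from `x` to `y`: some set `S` of deleted positions realizing `y`
destroys no occurrence of `w` in `x` and no occurrence of `w` in `y` spans a junction. -/
def Preserved (w x y : List Bool) : Prop :=
  ∃ S : Finset ℕ,
    (∀ k ∈ S, k < x.length) ∧
    S.card + y.length = x.length ∧
    deleteIdxs x S = y ∧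
    (∀ i, occursAt w x i → ∀ k ∈ S, ¬ (i ≤ k ∧ k < i + w.length)) ∧
    (∀ j, occursAt w y j → ∀ k ∈ S, ¬ (j < junction S k ∧ junction S k < j + w.length))

/-- `x` has a (maximal) run of length `ℓ` starting at position `i`. -/
def runAt (x : List Bool) (i ℓ : ℕ) : Prop :=
  0 < ℓ ∧ i + ℓ ≤ x.length ∧
  (∀ j, i ≤ j → j < i + ℓ → x.getD j false = x.getD i false) ∧
  (i = 0 ∨ x.getD (i - 1) false ≠ x.getD i false) ∧
  (i + ℓ = x.length ∨ x.getD (i + ℓ) false ≠ x.getD i false)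

/-- position `k` of `x` lies in a run of length `ℓ`. -/
def inRun (x : List Bool) (k ℓ : ℕ) : Prop := ∃ i, runAt x i ℓ ∧ i ≤ k ∧ k < i + ℓ

def w0000 : List Bool := [false, false, false, false]
def w1111 : List Bool := [true, true, true, true]
def w11011 : List Bool := [true, true, false, true, true]
def w110011 : List Bool := [true, true, false, false, true, true]

/-- The set of strings obtainable from `x` by deleting two symbols. -/
def D2 (x : List Bool) : Set (List Bool) :=
  { y | ∃ i j : ℕ, i < j ∧ j < x.length ∧ y = deleteIdxs x ({i, j} : Finset ℕ) }

/-- run-length representation of the runs of ones, in order. -/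
def tau1 (x : List Bool) : List ℕ :=
  ((x.splitBy (· == ·)).filter (fun r => r.headD false)).map List.length

/-- the subsequence of `tau1` of entries at least 2. -/
def tauGe2 (x : List Bool) : List ℕ := (tau1 x).filter (fun ℓ => decide (2 ≤ ℓ))

/-- sum of the odd-indexed entries. -/
def oddIdxSum (l : List ℕ) : ℕ :=
  ((Finset.range l.length).filter (fun i => i % 2 = 1)).sum (fun i => l.getD i 0)


lemma occurs_iff (z : List Bool) (i : ℕ) :
    occursAt w0000 z i ↔ (i + 4 ≤ z.length ∧ ∀ t < 4, z.getD (i+t) false = false) := by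
  constructor
  · rintro ⟨t, ht⟩
    have hlen : (z.drop i).length = 4 + t.length := by
      rw [← ht]; simp [w0000]; omega
    simp only [List.length_drop] at hlen
    have hiz : i ≤ z.length := by
      by_contra h
      push_neg at h
      omega
    have h4 : i + 4 ≤ z.length := by omega
    refine ⟨h4, fun s hs => ?_⟩
    have hlt : i + s < z.length := by omega
    have hlt' : s < (z.drop i).length := by simp [List.length_drop]; omega
    rw [List.getD_eq_getElem z false hlt]
    have h1 : z[i+s] = (z.drop i)[s]'hlt' := (List.getElem_drop).symm
    rw [h1]
    have h2 : (z.drop i)[s]'hlt' = (w0000 ++ t)[s]'(by rw [ht]; exact hlt') := by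
      simp only [ht]
    rw [h2]
    interval_cases s <;> simp [w0000]
  · rintro ⟨h4, hv⟩
    rw [occursAt, List.prefix_iff_eq_take]
    have hlw : (w0000 : List Bool).length = 4 := by simp [w0000]
    rw [hlw]
    apply List.ext_getElem
    · simp [w0000]; omega
    · intro n h1 h2
      have hn : n < 4 := by simpa [w0000] using h1
      have hval := hv n hn
      have hlt : i + n < z.length := by omega
      rw [List.getD_eq_getElem z false hlt] at hval
      have hd : n < (z.drop i).length := by simp [List.length_drop]; omega
      have e1 : (List.take 4 (z.drop i))[n]'h2 = (z.drop i)[n]'hd := List.getElem_take ..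
      have e2 : (z.drop i)[n]'hd = z[i+n] := List.getElem_drop
      rw [e1, e2, hval]
      interval_cases n <;> simp [w0000]


/-- the shift map from positions of `y` to positions of `x`. -/
def gmap (k₁ k₂ m : ℕ) : ℕ := if m < k₁ then m else if m + 1 < k₂ then m + 1 else m + 2

lemma filter_range_pair (n k₁ k₂ : ℕ) (h12 : k₁ < k₂) (h2 : k₂ < n) :
    (List.range n).filter (fun i => decide (i ∉ ({k₁, k₂} : Finset ℕ))) =
      List.range' 0 k₁ ++ List.range' (k₁+1) (k₂-k₁-1) ++ List.range' (k₂+1) (n-k₂-1) := by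
  have hsplit : List.range n =
      List.range' 0 k₁ ++ List.range' k₁ 1 ++ List.range' (k₁+1) (k₂-k₁-1)
        ++ List.range' k₂ 1 ++ List.range' (k₂+1) (n-k₂-1) := by
    rw [List.range_eq_range']
    have e1 : List.range' 0 k₁ ++ List.range' k₁ 1 = List.range' 0 (k₁+1) := by
      have := @List.range'_append 0 k₁ 1 1
      simpa [Nat.add_comm] using this
    have e2 : List.range' 0 (k₁+1) ++ List.range' (k₁+1) (k₂-k₁-1) = List.range' 0 k₂ := by
      have := @List.range'_append 0 (k₁+1) (k₂-k₁-1) 1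
      simp at this
      rw [this]
      congr 1
      omega
    have e3 : List.range' 0 k₂ ++ List.range' k₂ 1 = List.range' 0 (k₂+1) := by
      have := @List.range'_append 0 k₂ 1 1
      simpa [Nat.add_comm] using this
    have e4 : List.range' 0 (k₂+1) ++ List.range' (k₂+1) (n-k₂-1) = List.range' 0 n := by
      have := @List.range'_append 0 (k₂+1) (n-k₂-1) 1
      simp at this
      rw [this]
      congr 1
      omega
    rw [List.append_assoc, List.append_assoc, List.append_assoc]
    rw [← List.append_assoc (List.range' 0 k₁), e1]
    rw [← List.append_assoc, e2, ← List.append_assoc, e3, e4]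
  rw [hsplit]
  simp only [List.filter_append]
  have hall : ∀ a b : ℕ, (∀ m, a ≤ m → m < a + b → m ≠ k₁ ∧ m ≠ k₂) →
      (List.range' a b).filter (fun i => decide (i ∉ ({k₁, k₂} : Finset ℕ))) = List.range' a b := by
    intro a b h
    rw [List.filter_eq_self]
    intro m hm
    rw [List.mem_range'_1] at hm
    have := h m hm.1 hm.2
    simp [Finset.mem_insert, this.1, this.2]
  have hone : ∀ k, k ∈ ({k₁, k₂} : Finset ℕ) →
      (List.range' k 1).filter (fun i => decide (i ∉ ({k₁, k₂} : Finset ℕ))) = [] := by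
    intro k hk
    simp only [Finset.mem_insert, Finset.mem_singleton] at hk
    rcases hk with rfl | rfl <;> simp [List.range'_one, List.filter]
  rw [hall 0 k₁ (by omega), hall (k₁+1) (k₂-k₁-1) (by omega), hall (k₂+1) (n-k₂-1) (by omega),
    hone k₁ (by simp), hone k₂ (by simp)]
  simp

lemma delete_pair_length (x : List Bool) (k₁ k₂ : ℕ) (h12 : k₁ < k₂) (h2 : k₂ < x.length) :
    (deleteIdxs x ({k₁, k₂} : Finset ℕ)).length = x.length - 2 := by
  rw [deleteIdxs, filter_range_pair x.length k₁ k₂ h12 h2]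
  simp
  omega

lemma delete_pair_getD (x : List Bool) (k₁ k₂ : ℕ) (h12 : k₁ < k₂) (h2 : k₂ < x.length)
    (m : ℕ) (hm : m < x.length - 2) :
    (deleteIdxs x ({k₁, k₂} : Finset ℕ)).getD m false = x.getD (gmap k₁ k₂ m) false := by
  rw [deleteIdxs, filter_range_pair x.length k₁ k₂ h12 h2]
  have hlen : ((List.range' 0 k₁ ++ List.range' (k₁+1) (k₂-k₁-1) ++ List.range' (k₂+1) (x.length-k₂-1)).map
      (fun i => x.getD i false)).length = x.length - 2 := by simp; omega
  rw [List.getD_eq_getElem _ false (by rw [hlen]; exact hm)]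
  rw [List.getElem_map]
  congr 1
  rw [gmap]
  by_cases hc1 : m < k₁
  · rw [List.getElem_append_left (by simpa using (by simp; omega : m < (List.range' 0 k₁ ++ List.range' (k₁+1) (k₂-k₁-1)).length))]
    rw [List.getElem_append_left (by simp; omega)]
    rw [List.getElem_range']
    simp [hc1]
  · by_cases hc2 : m + 1 < k₂
    · rw [List.getElem_append_left (by simp; omega : m < (List.range' 0 k₁ ++ List.range' (k₁+1) (k₂-k₁-1)).length)]
      rw [List.getElem_append_right (by simp; omega)]
      rw [List.getElem_range']
      simp [hc1, hc2]
      omega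
    · rw [List.getElem_append_right (by simp; omega)]
      rw [List.getElem_range']
      simp [hc1, hc2]
      omega

lemma gmap_le (k₁ k₂ m : ℕ) : gmap k₁ k₂ m ≤ m + 2 := by
  unfold gmap; split_ifs <;> omega

lemma gmap_window (k₁ k₂ j t : ℕ) (h12 : k₁ < k₂) (ht : t < 4)
    (hns : ¬((j < k₁ ∧ k₁ < j + 4) ∨ (j < k₂ - 1 ∧ k₂ - 1 < j + 4))) :
    gmap k₁ k₂ (j + t) = gmap k₁ k₂ j + t := by
  push_neg at hns
  unfold gmap; split_ifs <;> omega

lemma gmap_inj (k₁ k₂ a b : ℕ) (_h12 : k₁ < k₂) (h : gmap k₁ k₂ a = gmap k₁ k₂ b) : a = b := by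
  unfold gmap at h; split_ifs at h <;> omega

lemma card_six (a b c d e f : ℕ) : ({a, b, c, d, e, f} : Finset ℕ).card ≤ 6 := by
  calc ({a, b, c, d, e, f} : Finset ℕ).card
      ≤ ({b, c, d, e, f} : Finset ℕ).card + 1 := Finset.card_insert_le _ _
    _ ≤ (({c, d, e, f} : Finset ℕ).card + 1) + 1 :=
        Nat.add_le_add_right (Finset.card_insert_le _ _) 1
    _ ≤ ((({d, e, f} : Finset ℕ).card + 1) + 1) + 1 :=
        Nat.add_le_add_right (Nat.add_le_add_right (Finset.card_insert_le _ _) 1) 1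
    _ ≤ (((({e, f} : Finset ℕ).card + 1) + 1) + 1) + 1 :=
        Nat.add_le_add_right (Nat.add_le_add_right (Nat.add_le_add_right (Finset.card_insert_le _ _) 1) 1) 1
    _ ≤ ((((({f} : Finset ℕ).card + 1) + 1) + 1) + 1) + 1 :=
        Nat.add_le_add_right (Nat.add_le_add_right (Nat.add_le_add_right (Nat.add_le_add_right (Finset.card_insert_le _ _) 1) 1) 1) 1
    _ ≤ 6 := by simp

/-- If two ones are deleted and `N₀₀₀₀(x) ≡ N₀₀₀₀(y) (mod 7)`, then `0000` is preserved. -/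
theorem two_ones_0000_preserved (x y : List Bool) (k₁ k₂ : ℕ)
    (h12 : k₁ < k₂) (h2 : k₂ < x.length)
    (hv1 : x.getD k₁ false = true) (hv2 : x.getD k₂ false = true)
    (hy : y = deleteIdxs x ({k₁, k₂} : Finset ℕ))
    (hmod : Nw w0000 x ≡ Nw w0000 y [MOD 7]) :
    Preserved w0000 x y := by
  have hw : (w0000 : List Bool).length = 4 := rfl
  have hn2 : 2 ≤ x.length := by omega
  have hylen : y.length = x.length - 2 := by
    rw [hy]; exact delete_pair_length x k₁ k₂ h12 h2
  have hget : ∀ m, m < x.length - 2 → y.getD m false = x.getD (gmap k₁ k₂ m) false := by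
    intro m hm; rw [hy]; exact delete_pair_getD x k₁ k₂ h12 h2 m hm
  -- occurrences of 0000 in x avoid positions holding `true`
  have havoid : ∀ i, occursAt w0000 x i → ∀ k, x.getD k false = true → ¬(i ≤ k ∧ k < i + 4) := by
    rintro i hi k hk ⟨h1l, h1r⟩
    rw [occurs_iff] at hi
    have hval := hi.2 (k - i) (by omega)
    rw [(by omega : i + (k - i) = k), hk] at hval
    simp at hval
  -- the spanning predicate
  set spanning : ℕ → Prop := fun j => (j < k₁ ∧ k₁ < j + 4) ∨ (j < k₂ - 1 ∧ k₂ - 1 < j + 4)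
    with hspan
  set A := (Finset.range x.length).filter (fun i => w0000 <+: x.drop i) with hA
  set B := (Finset.range y.length).filter (fun i => w0000 <+: y.drop i) with hB
  have hNwx : Nw w0000 x = A.card := rfl
  have hNwy : Nw w0000 y = B.card := rfl
  set Sp := B.filter (fun j => spanning j) with hSpdef
  set NS := B.filter (fun j => ¬ spanning j) with hNSdef
  have hmemB : ∀ j, j ∈ B ↔ occursAt w0000 y j := by
    intro j
    simp only [hB, Finset.mem_filter, Finset.mem_range, occursAt]
    constructor
    · exact fun h => h.2
    · intro h
      refine ⟨?_, h⟩
      have h' : occursAt w0000 y j := h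
      rw [occurs_iff] at h'
      omega
  have hpart : B.card = Sp.card + NS.card :=
    (Finset.card_filter_add_card_filter_not _).symm
  -- non-spanning occurrences of y biject with occurrences of x
  have hNS_card : NS.card = A.card := by
    apply Finset.card_bij (fun j _ => gmap k₁ k₂ j)
    · -- maps into A
      intro j hj
      simp only [hNSdef, Finset.mem_filter] at hj
      obtain ⟨hjB, hns⟩ := hj
      rw [hmemB, occurs_iff] at hjB
      obtain ⟨hj4, hjv⟩ := hjB
      rw [hylen] at hj4
      have hgle := gmap_le k₁ k₂ j
      simp only [hA, Finset.mem_filter, Finset.mem_range]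
      have hocc : occursAt w0000 x (gmap k₁ k₂ j) := by
        rw [occurs_iff]
        refine ⟨by omega, fun t ht => ?_⟩
        rw [← gmap_window k₁ k₂ j t h12 ht hns]
        rw [← hget (j + t) (by omega)]
        exact hjv t ht
      rw [occursAt] at hocc
      exact ⟨by omega, hocc⟩
    · -- injective
      intro a ha b hb hab
      exact gmap_inj k₁ k₂ a b h12 hab
    · -- surjective
      intro i hiA
      simp only [hA, Finset.mem_filter, Finset.mem_range] at hiA
      obtain ⟨hin, hiP⟩ := hiA
      have hiocc : occursAt w0000 x i := hiP
      have hi4 : i + 4 ≤ x.length := ((occurs_iff x i).mp hiocc).1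
      have hiv : ∀ t < 4, x.getD (i + t) false = false := ((occurs_iff x i).mp hiocc).2
      have hav1 := havoid i hiocc k₁ hv1
      have hav2 := havoid i hiocc k₂ hv2
      -- candidate preimage
      have key : ∃ j, ¬ spanning j ∧ gmap k₁ k₂ j = i ∧ j + 4 ≤ x.length - 2 := by
        rcases (by omega : i + 3 < k₁ ∨ (k₁ < i ∧ i + 3 < k₂) ∨ k₂ < i) with h | h | h
        · refine ⟨i, ?_, ?_, by omega⟩
          · simp only [hspan]; omega
          · unfold gmap; split_ifs <;> omega
        · refine ⟨i - 1, ?_, ?_, by omega⟩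
          · simp only [hspan]; omega
          · unfold gmap; split_ifs <;> omega
        · refine ⟨i - 2, ?_, ?_, by omega⟩
          · simp only [hspan]; omega
          · unfold gmap; split_ifs <;> omega
      obtain ⟨j, hjns, hji, hj4⟩ := key
      refine ⟨j, ?_, hji⟩
      simp only [hNSdef, Finset.mem_filter]
      refine ⟨?_, hjns⟩
      rw [hmemB, occurs_iff]
      refine ⟨by omega, fun t ht => ?_⟩
      rw [hget (j + t) (by omega), gmap_window k₁ k₂ j t h12 ht hjns, hji]
      exact hiv t ht
  -- spanning occurrences number at most 6
  have hSp_le : Sp.card ≤ 6 := by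
    have hsub : Sp ⊆ ({k₁ - 3, k₁ - 2, k₁ - 1, k₂ - 4, k₂ - 3, k₂ - 2} : Finset ℕ) := by
      intro j hj
      simp only [hSpdef, Finset.mem_filter, hspan] at hj
      simp only [Finset.mem_insert, Finset.mem_singleton]
      omega
    exact le_trans (Finset.card_le_card hsub) (card_six _ _ _ _ _ _)
  -- the congruence forces Sp to be empty
  have hcount : Nw w0000 y = Nw w0000 x + Sp.card := by
    rw [hNwx, hNwy, hpart, hNS_card]; ring
  have hle : Nw w0000 x ≤ Nw w0000 y := by omega
  have hdvd : (7 : ℕ) ∣ Nw w0000 y - Nw w0000 x := (Nat.modEq_iff_dvd' hle).mp hmod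
  have hSp0 : Sp.card = 0 := by
    have : Nw w0000 y - Nw w0000 x = Sp.card := by omega
    rw [this] at hdvd
    exact Nat.eq_zero_of_dvd_of_lt hdvd (by omega)
  have hSp_empty : ∀ j, occursAt w0000 y j → ¬ spanning j := by
    intro j hj hjs
    have : j ∈ Sp := by
      simp only [hSpdef, Finset.mem_filter]
      exact ⟨(hmemB j).mpr hj, hjs⟩
    rw [Finset.card_eq_zero] at hSp0
    rw [hSp0] at this
    exact absurd this (Finset.notMem_empty j)
  -- junction values
  have hjunc1 : junction ({k₁, k₂} : Finset ℕ) k₁ = k₁ := by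
    rw [junction]
    have : (Finset.range k₁).filter (fun m => m ∉ ({k₁, k₂} : Finset ℕ)) = Finset.range k₁ := by
      rw [Finset.filter_eq_self]
      intro m hm
      simp only [Finset.mem_range] at hm
      simp only [Finset.mem_insert, Finset.mem_singleton]
      omega
    rw [this, Finset.card_range]
  have hjunc2 : junction ({k₁, k₂} : Finset ℕ) k₂ = k₂ - 1 := by
    rw [junction]
    have : (Finset.range k₂).filter (fun m => m ∉ ({k₁, k₂} : Finset ℕ)) =
        (Finset.range k₂).erase k₁ := by
      ext m
      simp only [Finset.mem_filter, Finset.mem_erase, Finset.mem_range,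
        Finset.mem_insert, Finset.mem_singleton]
      omega
    rw [this, Finset.card_erase_of_mem (by simp [Finset.mem_range]; omega), Finset.card_range]
  -- assemble
  refine ⟨({k₁, k₂} : Finset ℕ), ?_, ?_, hy.symm, ?_, ?_⟩
  · intro k hk
    simp only [Finset.mem_insert, Finset.mem_singleton] at hk
    rcases hk with rfl | rfl <;> omega
  · rw [Finset.card_insert_of_notMem (by simp; omega), Finset.card_singleton, hylen]
    omega
  · intro i hi k hk
    simp only [Finset.mem_insert, Finset.mem_singleton] at hk
    rw [hw]
    rcases hk with rfl | rfl
    · exact havoid i hi k hv1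
    · exact havoid i hi k hv2
  · intro j hj k hk
    simp only [Finset.mem_insert, Finset.mem_singleton] at hk
    rw [hw]
    have hns := hSp_empty j hj
    simp only [hspan, not_or, not_and] at hns
    rcases hk with rfl | rfl
    · rw [hjunc1]
      intro ⟨ha, hb⟩
      exact (hns.1 ha) hb
    · rw [hjunc2]
      intro ⟨ha, hb⟩
      exact (hns.2 ha) hb
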